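/- Over the max-plus semifield, every regular solution x of the inequality A x ⊕ b ≤ x satisfies x ≥ A* b, and moreover x = A* x; in particular, when Tr(A) ≤ 0, all regular solutions of A x ⊕ b ≤ x are exactly the vectors x = A* u for regular u with u ≥ b. -/

import Mathlib

/-- Max-plus matrix–vector product: `(A x)_i = max_j (a_{ij} + x_j)`. -/
noncomputable def mpMulVec {n : ℕ} (A : Fin n → Fin n → EReal) (x : Fin n → EReal) :
    Fin n → EReal :=
  fun i => Finset.univ.sup fun j => A i j + x j

/-- Max-plus matrix product. -/
noncomputable def mpMul {n : ℕ} (A B : Fin n → Fin n → EReal) :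
    Fin n → Fin n → EReal :=
  fun i j => Finset.univ.sup fun k => A i k + B k j

/-- Max-plus identity matrix: `0` on the diagonal and `-∞` elsewhere. -/
noncomputable def mpId {n : ℕ} : Fin n → Fin n → EReal :=
  fun i j => if i = j then 0 else ⊥

/-- Max-plus matrix power. -/
noncomputable def mpPow {n : ℕ} (A : Fin n → Fin n → EReal) : ℕ → (Fin n → Fin n → EReal)
  | 0 => mpId
  | k + 1 => mpMul (mpPow A k) A

/-- Max-plus trace: maximum of the diagonal entries. -/
noncomputable def mpTrace {n : ℕ} (A : Fin n → Fin n → EReal) : EReal :=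
  Finset.univ.sup fun i => A i i

/-- `Tr(A) = tr A ⊕ tr A² ⊕ ⋯ ⊕ tr Aⁿ`. -/
noncomputable def mpTr {n : ℕ} (A : Fin n → Fin n → EReal) : EReal :=
  (Finset.Icc 1 n).sup fun k => mpTrace (mpPow A k)

/-- The Kleene star `A* = I ⊕ A ⊕ ⋯ ⊕ A^{n-1}`. -/
noncomputable def mpStar {n : ℕ} (A : Fin n → Fin n → EReal) :
    Fin n → Fin n → EReal :=
  fun i j => (Finset.range n).sup fun k => mpPow A k i j

section Aux

variable {n : ℕ}

lemma mpSup_add {α : Type*} (s : Finset α) (hs : s.Nonempty) (f : α → EReal) (c : EReal) :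
    s.sup f + c = s.sup fun a => f a + c := by
  obtain ⟨a, ha, hEq⟩ := s.exists_mem_eq_sup hs f
  refine le_antisymm ?_ (Finset.sup_le fun b hb => add_le_add_left (Finset.le_sup hb) c)
  rw [hEq]
  exact Finset.le_sup (f := fun a => f a + c) ha

lemma mpAdd_sup {α : Type*} (s : Finset α) (hs : s.Nonempty) (f : α → EReal) (c : EReal) :
    c + s.sup f = s.sup fun a => c + f a := by
  rw [add_comm, mpSup_add s hs]
  exact Finset.sup_congr rfl fun a _ => add_comm _ _

lemma mpPow_zero (A : Fin n → Fin n → EReal) : mpPow A 0 = mpId := rfl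

lemma mpPow_succ (A : Fin n → Fin n → EReal) (k : ℕ) :
    mpPow A (k + 1) = mpMul (mpPow A k) A := rfl

lemma mpMulVec_mul (A B : Fin n → Fin n → EReal) (x : Fin n → EReal) :
    mpMulVec (mpMul A B) x = mpMulVec A (mpMulVec B x) := by
  funext i
  have hne : (Finset.univ : Finset (Fin n)).Nonempty := ⟨i, Finset.mem_univ i⟩
  show (Finset.univ.sup fun j => mpMul A B i j + x j)
      = Finset.univ.sup fun v => A i v + mpMulVec B x v
  calc (Finset.univ.sup fun j => mpMul A B i j + x j)
      = Finset.univ.sup fun j => Finset.univ.sup fun v => A i v + (B v j + x j) := by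
        refine Finset.sup_congr rfl fun j _ => ?_
        rw [mpMul, mpSup_add _ hne]
        exact Finset.sup_congr rfl fun v _ => add_assoc _ _ _
    _ = Finset.univ.sup fun v => Finset.univ.sup fun j => A i v + (B v j + x j) :=
        Finset.sup_comm _ _ _
    _ = Finset.univ.sup fun v => A i v + mpMulVec B x v := by
        refine Finset.sup_congr rfl fun v _ => ?_
        rw [mpMulVec, mpAdd_sup _ hne]

lemma mpMul_assoc (A B C : Fin n → Fin n → EReal) :
    mpMul (mpMul A B) C = mpMul A (mpMul B C) := by
  funext i j
  exact congrFun (mpMulVec_mul A B fun v => C v j) i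

lemma mpId_mulVec (x : Fin n → EReal) : mpMulVec (mpId (n := n)) x = x := by
  funext i
  refine le_antisymm (Finset.sup_le fun j _ => ?_) ?_
  · by_cases h : i = j
    · subst h; simp [mpId]
    · simp [mpId, h]
  · have := Finset.le_sup (f := fun j => mpId i j + x j) (Finset.mem_univ i)
    simpa [mpId, mpMulVec] using this

lemma mpMul_id (A : Fin n → Fin n → EReal) : mpMul A mpId = A := by
  funext i j
  refine le_antisymm (Finset.sup_le fun k _ => ?_) ?_
  · by_cases h : k = j
    · subst h; simp [mpId]
    · simp [mpId, h]
  · have := Finset.le_sup (f := fun k => A i k + mpId k j) (Finset.mem_univ j)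
    simpa [mpId, mpMul] using this

lemma mpId_mul (A : Fin n → Fin n → EReal) : mpMul mpId A = A := by
  funext i j
  exact congrFun (mpId_mulVec fun v => A v j) i

lemma mpPow_succ' (A : Fin n → Fin n → EReal) (k : ℕ) :
    mpPow A (k + 1) = mpMul A (mpPow A k) := by
  induction k with
  | zero => rw [mpPow_succ, mpPow_zero, mpId_mul, mpMul_id]
  | succ k ih =>
    show mpMul (mpPow A (k + 1)) A = mpMul A (mpMul (mpPow A k) A)
    rw [ih, mpMul_assoc]

lemma mpMulVec_mono_vec (A : Fin n → Fin n → EReal) {x y : Fin n → EReal}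
    (h : ∀ j, x j ≤ y j) (i : Fin n) : mpMulVec A x i ≤ mpMulVec A y i :=
  Finset.sup_le fun j _ => le_trans (add_le_add_right (h j) _)
    (Finset.le_sup (f := fun j => A i j + y j) (Finset.mem_univ j))

lemma mpMulVec_mono_mat {A B : Fin n → Fin n → EReal}
    (h : ∀ i j, A i j ≤ B i j) (x : Fin n → EReal) (i : Fin n) :
    mpMulVec A x i ≤ mpMulVec B x i :=
  Finset.sup_le fun j _ => le_trans (add_le_add_left (h i j) _)
    (Finset.le_sup (f := fun j => B i j + x j) (Finset.mem_univ j))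

lemma mpPow_mulVec_le (A : Fin n → Fin n → EReal) {x : Fin n → EReal}
    (hAx : ∀ i, mpMulVec A x i ≤ x i) : ∀ k i, mpMulVec (mpPow A k) x i ≤ x i := by
  intro k
  induction k with
  | zero => intro i; rw [mpPow_zero, mpId_mulVec]
  | succ k ih =>
    intro i
    rw [mpPow_succ, mpMulVec_mul]
    exact le_trans (mpMulVec_mono_vec _ hAx i) (ih i)

lemma mpStar_mulVec (A : Fin n → Fin n → EReal) (x : Fin n → EReal) (i : Fin n) :
    mpMulVec (mpStar A) x i = (Finset.range n).sup fun k => mpMulVec (mpPow A k) x i := by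
  have hne : (Finset.range n).Nonempty := ⟨0, Finset.mem_range.2 i.pos⟩
  show (Finset.univ.sup fun j => mpStar A i j + x j) = _
  calc (Finset.univ.sup fun j => mpStar A i j + x j)
      = Finset.univ.sup fun j => (Finset.range n).sup fun k => mpPow A k i j + x j := by
        refine Finset.sup_congr rfl fun j _ => ?_
        rw [mpStar, mpSup_add _ hne]
    _ = (Finset.range n).sup fun k => Finset.univ.sup fun j => mpPow A k i j + x j :=
        Finset.sup_comm _ _ _

lemma le_mpStar_mulVec (A : Fin n → Fin n → EReal) (x : Fin n → EReal) (i : Fin n) :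
    x i ≤ mpMulVec (mpStar A) x i := by
  rw [mpStar_mulVec]
  have h0 : mpMulVec (mpPow A 0) x i = x i := by rw [mpPow_zero, mpId_mulVec]
  calc x i = mpMulVec (mpPow A 0) x i := h0.symm
    _ ≤ _ := Finset.le_sup (f := fun k => mpMulVec (mpPow A k) x i)
        (Finset.mem_range.2 i.pos)

lemma mpStar_mulVec_le (A : Fin n → Fin n → EReal) {x : Fin n → EReal}
    (hAx : ∀ i, mpMulVec A x i ≤ x i) (i : Fin n) :
    mpMulVec (mpStar A) x i ≤ x i := by
  rw [mpStar_mulVec]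
  exact Finset.sup_le fun k _ => mpPow_mulVec_le A hAx k i

/-- Weight of a path of length `m` along `p`. -/
noncomputable def mpW (A : Fin n → Fin n → EReal) (p : ℕ → Fin n) (m : ℕ) : EReal :=
  ∑ t ∈ Finset.range m, A (p t) (p (t + 1))

lemma mpW_le_pow (A : Fin n → Fin n → EReal) (p : ℕ → Fin n) :
    ∀ m, mpW A p m ≤ mpPow A m (p 0) (p m) := by
  intro m
  induction m with
  | zero => simp [mpW, mpPow_zero, mpId]
  | succ m ih =>
    have h : mpW A p (m + 1) = mpW A p m + A (p m) (p (m + 1)) := Finset.sum_range_succ _ _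
    rw [h, mpPow_succ, mpMul]
    calc mpW A p m + A (p m) (p (m + 1))
        ≤ mpPow A m (p 0) (p m) + A (p m) (p (m + 1)) := add_le_add_left ih _
      _ ≤ _ := Finset.le_sup (f := fun v => mpPow A m (p 0) v + A v (p (m + 1)))
          (Finset.mem_univ (p m))

lemma pow_le_mpW (A : Fin n → Fin n → EReal) :
    ∀ (m : ℕ) (i j : Fin n), mpPow A m i j = ⊥ ∨
      ∃ p : ℕ → Fin n, p 0 = i ∧ p m = j ∧ mpPow A m i j ≤ mpW A p m := by
  intro m
  induction m with
  | zero =>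
    intro i j
    by_cases h : i = j
    · subst h
      exact Or.inr ⟨fun _ => i, rfl, rfl, by simp [mpPow_zero, mpId, mpW]⟩
    · exact Or.inl (by simp [mpPow_zero, mpId, h])
  | succ m ih =>
    intro i j
    have hne : (Finset.univ : Finset (Fin n)).Nonempty := ⟨i, Finset.mem_univ i⟩
    obtain ⟨v, -, hv⟩ := Finset.exists_mem_eq_sup Finset.univ hne
      fun v => mpPow A m i v + A v j
    have hval : mpPow A (m + 1) i j = mpPow A m i v + A v j := by
      rw [mpPow_succ, mpMul]; exact hv
    rcases ih i v with hbot | ⟨p, hp0, hpm, hle⟩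
    · left; rw [hval, hbot, EReal.bot_add]
    · right
      refine ⟨fun t => if t ≤ m then p t else j, by simp [hp0], by simp, ?_⟩
      have hq : mpW A (fun t => if t ≤ m then p t else j) (m + 1)
          = mpW A p m + A v j := by
        rw [mpW, Finset.sum_range_succ]
        congr 1
        · rw [mpW]
          refine Finset.sum_congr rfl fun t ht => ?_
          have ht' := Finset.mem_range.1 ht
          simp only [if_pos ht'.le, if_pos (Nat.succ_le_of_lt ht')]
        · simp only [le_refl, if_pos, if_neg (Nat.not_succ_le_self m), hpm]
      rw [hval, hq]
      exact add_le_add_left hle _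

lemma pow_n_le_star (A : Fin n → Fin n → EReal) (h : mpTr A ≤ 0) (i j : Fin n) :
    mpPow A n i j ≤ mpStar A i j := by
  have hn : 0 < n := i.pos
  rcases pow_le_mpW A n i j with hbot | ⟨p, hp0, hpn, hle⟩
  · rw [hbot]; exact bot_le
  obtain ⟨a, c, hac, hpac⟩ := Fintype.exists_ne_map_eq_of_card_lt
    (fun r : Fin (n + 1) => p r) (by simp)
  obtain ⟨s, t, hst, htn, hpst⟩ : ∃ s t : ℕ, s < t ∧ t ≤ n ∧ p s = p t := by
    rcases lt_or_gt_of_ne hac with hlt | hgt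
    · exact ⟨a, c, hlt, Nat.lt_succ_iff.1 c.isLt, hpac⟩
    · exact ⟨c, a, hgt, Nat.lt_succ_iff.1 a.isLt, hpac.symm⟩
  set ℓ := t - s with hℓdef
  have hℓ1 : 1 ≤ ℓ := by omega
  have hℓn : ℓ ≤ n := by omega
  have hsl : s + ℓ = t := by omega
  have hnl : n - ℓ + ℓ = n := by omega
  have hsle : s ≤ n - ℓ := by omega
  -- cycle weight is ≤ 0
  have hcyc : (∑ r ∈ Finset.Ico s t, A (p r) (p (r + 1))) ≤ 0 := by
    have h1 : (∑ r ∈ Finset.Ico s t, A (p r) (p (r + 1)))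
        = mpW A (fun r => p (s + r)) ℓ := by
      rw [Finset.sum_Ico_eq_sum_range, mpW]
      refine Finset.sum_congr rfl fun r _ => ?_
      have e : s + r + 1 = s + (r + 1) := by omega
      simp only [e]
    have h2 : mpW A (fun r => p (s + r)) ℓ ≤ mpPow A ℓ (p s) (p s) := by
      have h2' := mpW_le_pow A (fun r => p (s + r)) ℓ
      simpa [hsl, ← hpst] using h2'
    have h3 : mpPow A ℓ (p s) (p s) ≤ mpTrace (mpPow A ℓ) :=
      Finset.le_sup (f := fun v => mpPow A ℓ v v) (Finset.mem_univ (p s))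
    have h4 : mpTrace (mpPow A ℓ) ≤ mpTr A :=
      Finset.le_sup (f := fun k => mpTrace (mpPow A k)) (Finset.mem_Icc.2 ⟨hℓ1, hℓn⟩)
    calc (∑ r ∈ Finset.Ico s t, A (p r) (p (r + 1)))
        = mpW A (fun r => p (s + r)) ℓ := h1
      _ ≤ mpPow A ℓ (p s) (p s) := h2
      _ ≤ mpTrace (mpPow A ℓ) := h3
      _ ≤ mpTr A := h4
      _ ≤ 0 := h
  -- shortcut path
  set q : ℕ → Fin n := fun r => if r < s then p r else p (r + ℓ) with hqdef
  have hq0 : q 0 = i := by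
    by_cases hs0 : 0 < s
    · simp only [hqdef, if_pos hs0, hp0]
    · have hs : s = 0 := by omega
      have e0 : q 0 = p (0 + ℓ) := if_neg (by omega)
      have e0' : (0 : ℕ) + ℓ = t := by omega
      rw [e0, e0', ← hpst, hs, hp0]
  have hqm : q (n - ℓ) = j := by
    have hns : ¬ (n - ℓ < s) := by omega
    have : q (n - ℓ) = p (n - ℓ + ℓ) := if_neg hns
    rw [this, hnl, hpn]
  have hpre : ∀ r ∈ Finset.Ico 0 s, A (q r) (q (r + 1)) = A (p r) (p (r + 1)) := by
    intro r hr
    have hrs : r < s := (Finset.mem_Ico.1 hr).2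
    have h1 : q r = p r := if_pos hrs
    have h2 : q (r + 1) = p (r + 1) := by
      by_cases hh : r + 1 < s
      · exact if_pos hh
      · have hr1 : r + 1 = s := by omega
        have e1 : q (r + 1) = p (r + 1 + ℓ) := if_neg hh
        rw [e1, hr1, hsl, ← hpst, ← hr1]
    rw [h1, h2]
  have e1 : mpW A p n
      = (∑ r ∈ Finset.Ico 0 s, A (p r) (p (r + 1)))
        + ((∑ r ∈ Finset.Ico s t, A (p r) (p (r + 1)))
          + (∑ r ∈ Finset.Ico t n, A (p r) (p (r + 1)))) := by
    rw [mpW, Finset.range_eq_Ico,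
      ← Finset.sum_Ico_consecutive (fun r => A (p r) (p (r + 1))) (Nat.zero_le s)
        (show s ≤ n by omega),
      ← Finset.sum_Ico_consecutive (fun r => A (p r) (p (r + 1))) hst.le htn]
  have e2 : mpW A q (n - ℓ)
      = (∑ r ∈ Finset.Ico 0 s, A (p r) (p (r + 1)))
        + (∑ r ∈ Finset.Ico t n, A (p r) (p (r + 1))) := by
    rw [mpW, Finset.range_eq_Ico,
      ← Finset.sum_Ico_consecutive (fun r => A (q r) (q (r + 1))) (Nat.zero_le s) hsle]
    congr 1
    · exact Finset.sum_congr rfl hpre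
    · have hmid : ∀ r ∈ Finset.Ico s (n - ℓ),
          A (q r) (q (r + 1)) = A (p (ℓ + r)) (p (ℓ + r + 1)) := by
        intro r hr
        have hrs : s ≤ r := (Finset.mem_Ico.1 hr).1
        have e1' : q r = p (r + ℓ) := if_neg (by omega)
        have e2' : q (r + 1) = p (r + 1 + ℓ) := if_neg (by omega)
        rw [e1', e2']
        have c1 : r + ℓ = ℓ + r := by omega
        have c2 : r + 1 + ℓ = ℓ + r + 1 := by omega
        rw [c1, c2]
      rw [Finset.sum_congr rfl hmid,
        show (fun r => A (p (ℓ + r)) (p (ℓ + r + 1)))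
          = fun r => (fun r' => A (p r') (p (r' + 1))) (ℓ + r) from rfl,
        Finset.sum_Ico_add (fun r' => A (p r') (p (r' + 1))) s (n - ℓ) ℓ]
      have c3 : s + ℓ = t := hsl
      have c4 : n - ℓ + ℓ = n := hnl
      rw [c3, c4]
  have hwq : mpW A p n ≤ mpW A q (n - ℓ) := by
    rw [e1, e2]
    refine add_le_add_right ?_ _
    calc (∑ r ∈ Finset.Ico s t, A (p r) (p (r + 1)))
          + (∑ r ∈ Finset.Ico t n, A (p r) (p (r + 1)))
        ≤ 0 + (∑ r ∈ Finset.Ico t n, A (p r) (p (r + 1))) := add_le_add_left hcyc _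
      _ = ∑ r ∈ Finset.Ico t n, A (p r) (p (r + 1)) := zero_add _
  calc mpPow A n i j ≤ mpW A p n := hle
    _ ≤ mpW A q (n - ℓ) := hwq
    _ ≤ mpPow A (n - ℓ) (q 0) (q (n - ℓ)) := mpW_le_pow A q (n - ℓ)
    _ = mpPow A (n - ℓ) i j := by rw [hq0, hqm]
    _ ≤ mpStar A i j := by
        rw [mpStar]
        exact Finset.le_sup (f := fun k => mpPow A k i j)
          (Finset.mem_range.2 (by omega))

lemma mpMul_star_le (A : Fin n → Fin n → EReal) (h : mpTr A ≤ 0) (i j : Fin n) :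
    mpMul A (mpStar A) i j ≤ mpStar A i j := by
  have hn : 0 < n := i.pos
  have hne : (Finset.range n).Nonempty := ⟨0, Finset.mem_range.2 hn⟩
  have key : mpMul A (mpStar A) i j
      = (Finset.range n).sup fun k => mpPow A (k + 1) i j := by
    calc mpMul A (mpStar A) i j
        = Finset.univ.sup fun v => (Finset.range n).sup fun k => A i v + mpPow A k v j := by
          rw [mpMul]
          exact Finset.sup_congr rfl fun v _ => by rw [mpStar, mpAdd_sup _ hne]
      _ = (Finset.range n).sup fun k => Finset.univ.sup fun v => A i v + mpPow A k v j :=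
          Finset.sup_comm _ _ _
      _ = (Finset.range n).sup fun k => mpPow A (k + 1) i j := by
          refine Finset.sup_congr rfl fun k _ => ?_
          rw [mpPow_succ', mpMul]
  rw [key]
  refine Finset.sup_le fun k hk => ?_
  have hk' : k + 1 ≤ n := Finset.mem_range.1 hk
  rcases eq_or_lt_of_le hk' with heq | hlt
  · rw [heq]; exact pow_n_le_star A h i j
  · rw [mpStar]
    exact Finset.le_sup (f := fun k => mpPow A k i j) (Finset.mem_range.2 hlt)

end Aux

/-- Max-plus: every regular solution `x` of `A x ⊕ b ≤ x` satisfies `x ≥ A* b`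
and `x = A* x`; moreover, when `Tr(A) ≤ 0`, the regular solutions of
`A x ⊕ b ≤ x` are exactly the vectors `x = A* u` with `u` regular, `u ≥ b`. -/
theorem stmt13 {n : ℕ} (A : Fin n → Fin n → EReal) (b : Fin n → EReal) :
    (∀ x : Fin n → ℝ,
      (∀ i, mpMulVec A (fun j => (x j : EReal)) i ⊔ b i ≤ (x i : EReal)) →
      (∀ i, mpMulVec (mpStar A) b i ≤ (x i : EReal)) ∧
      (∀ i, mpMulVec (mpStar A) (fun j => (x j : EReal)) i = (x i : EReal))) ∧
    (mpTr A ≤ 0 → ∀ x : Fin n → ℝ,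
      ((∀ i, mpMulVec A (fun j => (x j : EReal)) i ⊔ b i ≤ (x i : EReal)) ↔
        ∃ u : Fin n → ℝ, (∀ i, b i ≤ (u i : EReal)) ∧
          ∀ i, (x i : EReal) = mpMulVec (mpStar A) (fun j => (u j : EReal)) i)) := by
  constructor
  · intro x hx
    have hb : ∀ i, b i ≤ (x i : EReal) := fun i => le_trans le_sup_right (hx i)
    have hAx : ∀ i, mpMulVec A (fun j => (x j : EReal)) i ≤ (x i : EReal) :=
      fun i => le_trans le_sup_left (hx i)
    have hstar : ∀ i, mpMulVec (mpStar A) (fun j => (x j : EReal)) i = (x i : EReal) :=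
      fun i => le_antisymm (mpStar_mulVec_le A hAx i) (le_mpStar_mulVec A (fun j => ((x j : ℝ) : EReal)) i)
    refine ⟨fun i => ?_, hstar⟩
    calc mpMulVec (mpStar A) b i
        ≤ mpMulVec (mpStar A) (fun j => (x j : EReal)) i := mpMulVec_mono_vec _ hb i
      _ = (x i : EReal) := hstar i
  · intro hTr x
    constructor
    · intro hx
      refine ⟨x, fun i => le_trans le_sup_right (hx i), fun i => ?_⟩
      exact (le_antisymm
        (mpStar_mulVec_le A (fun i => le_trans le_sup_left (hx i)) i)
        (le_mpStar_mulVec A (fun j => ((x j : ℝ) : EReal)) i)).symm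
    · rintro ⟨u, hbu, hxu⟩ i
      have hxeq : (fun j => ((x j : ℝ) : EReal))
          = mpMulVec (mpStar A) (fun j => (u j : EReal)) := funext hxu
      have h1 : b i ≤ (x i : EReal) := by
        rw [hxu i]
        exact le_trans (hbu i) (le_mpStar_mulVec A (fun j => ((u j : ℝ) : EReal)) i)
      have h2 : mpMulVec A (fun j => (x j : EReal)) i ≤ (x i : EReal) := by
        rw [hxu i, hxeq, ← mpMulVec_mul]
        exact mpMulVec_mono_mat (fun i j => mpMul_star_le A hTr i j) _ i
      exact sup_le h2 h1
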